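/- A matroid M on ground set E with automorphism (e f) (transposition of two elements e ≠ f), such that {e,f} is both independent and coindependent in M, is uniquely determined by the two minors M\{e,f} (deletion) and M/{e,f} (contraction): if M and M' are two such matroids of the same rank with M\ef = M'\ef and M/ef = M'/ef, then M = M'. -/

import Mathlib

/-- Deletion of a set of elements from a matroid. -/
def Matroid.del {α : Type*} (M : Matroid α) (D : Set α) : Matroid α :=
  M.restrict (M.E \ D)

/-- Contraction of a set of elements in a matroid, defined via duality. -/
def Matroid.con {α : Type*} (M : Matroid α) (C : Set α) : Matroid α :=
  (M.dual.del C).dual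

open Set

namespace Matroid

variable {α : Type*}

lemma del_ground' (M : Matroid α) (D : Set α) : (M.del D).E = M.E \ D := rfl

lemma del_indep_iff' {M : Matroid α} {D I : Set α} :
    (M.del D).Indep I ↔ M.Indep I ∧ I ⊆ M.E \ D := Iff.rfl

lemma con_ground' (M : Matroid α) (C : Set α) : (M.con C).E = M.E \ C := rfl

lemma del_base_iff'' {M : Matroid α} {D B : Set α} (hco : M.Coindep D) :
    (M.del D).IsBase B ↔ M.IsBase B ∧ Disjoint B D := by
  rw [Matroid.del, isBase_restrict_iff diff_subset]
  constructor
  · intro h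
    refine ⟨h.indep.isBase_of_spanning ⟨?_, h.indep.subset_ground⟩, (subset_diff.mp h.subset).2⟩
    rw [h.closure_eq_closure]
    exact hco.compl_spanning.closure_eq
  · rintro ⟨hB, hd⟩
    exact hB.isBasis_of_subset diff_subset (subset_diff.mpr ⟨hB.subset_ground, hd⟩)

lemma con_base_iff'' {M : Matroid α} {C B : Set α} (hC : M.Indep C) :
    (M.con C).IsBase B ↔ M.IsBase (B ∪ C) ∧ Disjoint B C := by
  have hCE : C ⊆ M.E := hC.subset_ground
  have hg : (M✶.del C).E = M.E \ C := by simp [Matroid.del]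
  rw [Matroid.con, dual_isBase_iff', del_base_iff'' hC.coindep, hg, diff_diff_comm]
  constructor
  · rintro ⟨⟨hb, -⟩, hBE⟩
    have hBC : B ∪ C ⊆ M.E := union_subset (hBE.trans diff_subset) hCE
    rw [show (M.E \ B) \ C = M.E \ (B ∪ C) by rw [diff_diff]] at hb
    have h2 := (dual_isBase_iff (diff_subset)).1 hb
    rw [diff_diff_cancel_left hBC] at h2
    exact ⟨h2, (subset_diff.mp hBE).2⟩
  · rintro ⟨hB, hd⟩
    have hBE : B ⊆ M.E \ C :=
      subset_diff.mpr ⟨subset_union_left.trans hB.subset_ground, hd⟩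
    refine ⟨⟨?_, disjoint_sdiff_left⟩, hBE⟩
    rw [show (M.E \ B) \ C = M.E \ (B ∪ C) by rw [diff_diff]]
    exact hB.compl_isBase_dual

lemma swap_image_of_not_mem [DecidableEq α] {e f : α} {X : Set α} (he : e ∉ X) (hf : f ∉ X) :
    Equiv.swap e f '' X = X := by
  rw [show Equiv.swap e f '' X = id '' X from Set.image_congr fun x hx =>
    Equiv.swap_apply_of_ne_of_ne (by rintro rfl; exact he hx) (by rintro rfl; exact hf hx),
    image_id]

lemma base_iff_aux [DecidableEq α] (M : Matroid α) [M.Finite] (e f : α) (hef : e ≠ f)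
    (haut : ∀ B : Set α, M.IsBase B ↔ M.IsBase ((Equiv.swap e f) '' B))
    (hind : M.Indep {e, f}) (hcoind : M.Coindep {e, f})
    (r : ℕ) (hrank : ∀ B, M.IsBase B → B.ncard = r) (B : Set α) :
    M.IsBase B ↔
      (Disjoint B {e, f} ∧ (M.del {e, f}).IsBase B) ∨
      ({e, f} ⊆ B ∧ (M.con {e, f}).IsBase (B \ {e, f})) ∨
      (((e ∈ B ∧ f ∉ B) ∨ (f ∈ B ∧ e ∉ B)) ∧ (M.del {e, f}).Indep (B \ {e, f}) ∧
        (M.con {e, f}).Spanning (B \ {e, f}) ∧ (B \ {e, f}).ncard = r - 1) := by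
  set C : Set α := {e, f} with hC
  have hCE : C ⊆ M.E := hind.subset_ground
  have hr2 : 2 ≤ r := by
    obtain ⟨B2, hB2, hCB2⟩ := hind.exists_isBase_superset
    have hfin : B2.Finite := M.set_finite B2 hB2.subset_ground
    have h2 : C.ncard = 2 := Set.ncard_pair hef
    have := Set.ncard_le_ncard hCB2 hfin
    rw [h2, hrank _ hB2] at this
    exact this
  -- swap images
  have hswap : ∀ X : Set α, Disjoint X C → Equiv.swap e f '' (X ∪ {e}) = X ∪ {f} := by
    intro X hd
    have heX : e ∉ X := fun h => hd.ne_of_mem h (mem_insert e {f}) rfl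
    have hfX : f ∉ X := fun h => hd.ne_of_mem h (mem_insert_of_mem e rfl) rfl
    rw [image_union, swap_image_of_not_mem heX hfX, image_singleton, Equiv.swap_apply_left]
  have hswap' : ∀ X : Set α, Disjoint X C → Equiv.swap e f '' (X ∪ {f}) = X ∪ {e} := by
    intro X hd
    have heX : e ∉ X := fun h => hd.ne_of_mem h (mem_insert e {f}) rfl
    have hfX : f ∉ X := fun h => hd.ne_of_mem h (mem_insert_of_mem e rfl) rfl
    rw [image_union, swap_image_of_not_mem heX hfX, image_singleton, Equiv.swap_apply_right]
  constructor
  · intro hB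
    have hBfin : B.Finite := M.set_finite B hB.subset_ground
    by_cases he : e ∈ B <;> by_cases hf : f ∈ B
    · -- both in B
      refine Or.inr (Or.inl ⟨insert_subset he (singleton_subset_iff.2 hf), ?_⟩)
      rw [con_base_iff'' hind, diff_union_of_subset (insert_subset he (singleton_subset_iff.2 hf))]
      exact ⟨hB, disjoint_sdiff_left⟩
    · -- e ∈ B, f ∉ B
      refine Or.inr (Or.inr ⟨Or.inl ⟨he, hf⟩, ⟨hB.indep.subset diff_subset,
        diff_subset_diff_left hB.subset_ground⟩, ?_, ?_⟩)
      · rw [spanning_iff_exists_isBase_subset']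
        obtain ⟨B1, hB1, hCB1, hB1sub⟩ := hind.exists_isBase_subset_union_isBase hB
        have hB1XC : B1 ⊆ (B \ C) ∪ C := by
          intro x hx
          rcases hB1sub hx with h | h
          · exact Or.inr h
          · by_cases hxC : x ∈ C
            · exact Or.inr hxC
            · exact Or.inl ⟨h, hxC⟩
        refine ⟨⟨B1 \ C, ?_, ?_⟩, ?_⟩
        · rw [con_base_iff'' hind, diff_union_of_subset hCB1]
          exact ⟨hB1, disjoint_sdiff_left⟩
        · intro x hx
          rcases hB1XC hx.1 with h | h
          · exact h
          · exact absurd h hx.2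
        · rw [con_ground']
          exact diff_subset_diff_left hB.subset_ground
      · have hBe : B \ C = B \ {e} := by
          ext x
          simp only [hC, mem_diff, mem_insert_iff, mem_singleton_iff]
          constructor
          · rintro ⟨hx, h⟩; exact ⟨hx, fun h' => h (Or.inl h')⟩
          · rintro ⟨hx, h⟩
            refine ⟨hx, ?_⟩
            rintro (rfl | rfl)
            · exact h rfl
            · exact hf hx
        rw [hBe, Set.ncard_diff_singleton_of_mem he, hrank _ hB]
    · -- f ∈ B, e ∉ B
      refine Or.inr (Or.inr ⟨Or.inr ⟨hf, he⟩, ⟨hB.indep.subset diff_subset,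
        diff_subset_diff_left hB.subset_ground⟩, ?_, ?_⟩)
      · rw [spanning_iff_exists_isBase_subset']
        obtain ⟨B1, hB1, hCB1, hB1sub⟩ := hind.exists_isBase_subset_union_isBase hB
        have hB1XC : B1 ⊆ (B \ C) ∪ C := by
          intro x hx
          rcases hB1sub hx with h | h
          · exact Or.inr h
          · by_cases hxC : x ∈ C
            · exact Or.inr hxC
            · exact Or.inl ⟨h, hxC⟩
        refine ⟨⟨B1 \ C, ?_, ?_⟩, ?_⟩
        · rw [con_base_iff'' hind, diff_union_of_subset hCB1]
          exact ⟨hB1, disjoint_sdiff_left⟩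
        · intro x hx
          rcases hB1XC hx.1 with h | h
          · exact h
          · exact absurd h hx.2
        · rw [con_ground']
          exact diff_subset_diff_left hB.subset_ground
      · have hBe : B \ C = B \ {f} := by
          ext x
          simp only [hC, mem_diff, mem_insert_iff, mem_singleton_iff]
          constructor
          · rintro ⟨hx, h⟩; exact ⟨hx, fun h' => h (Or.inr h')⟩
          · rintro ⟨hx, h⟩
            refine ⟨hx, ?_⟩
            rintro (rfl | rfl)
            · exact he hx
            · exact h rfl
        rw [hBe, Set.ncard_diff_singleton_of_mem hf, hrank _ hB]
    · -- neither
      refine Or.inl ⟨?_, ?_⟩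
      · rw [disjoint_iff_forall_ne]
        rintro x hx y hy rfl
        rcases hy with rfl | rfl
        · exact he hx
        · exact hf hx
      · rw [del_base_iff'' hcoind]
        refine ⟨hB, ?_⟩
        rw [disjoint_iff_forall_ne]
        rintro x hx y hy rfl
        rcases hy with rfl | rfl
        · exact he hx
        · exact hf hx
  · rintro (⟨hd, hb⟩ | ⟨hCB, hb⟩ | ⟨hmem, hi, hs, hcard⟩)
    · exact ((del_base_iff'' hcoind).1 hb).1
    · rw [con_base_iff'' hind] at hb
      rw [diff_union_of_subset hCB] at hb
      exact hb.1
    · -- one of e, f in B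
      set X : Set α := B \ C with hX
      obtain ⟨hXi, hXE⟩ := (del_indep_iff').1 hi
      have hXd : Disjoint X C := (subset_diff.mp hXE).2
      have heX : e ∉ X := fun h => hXd.ne_of_mem h (mem_insert e {f}) rfl
      have hfX : f ∉ X := fun h => hXd.ne_of_mem h (mem_insert_of_mem e rfl) rfl
      have hXfin : X.Finite := M.set_finite X (hXE.trans diff_subset)
      rw [spanning_iff_exists_isBase_subset'] at hs
      obtain ⟨⟨B0, hB0, hB0X⟩, -⟩ := hs
      rw [con_base_iff'' hind] at hB0
      obtain ⟨B1, hB1, hXB1, hB1sub⟩ := hXi.exists_isBase_subset_union_isBase hB0.1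
      have hB1XC : B1 ⊆ X ∪ C := by
        intro x hx
        rcases hB1sub hx with h | h
        · exact Or.inl h
        · rcases h with h | h
          · exact Or.inl (hB0X h)
          · exact Or.inr h
      have hB1fin : B1.Finite := M.set_finite B1 hB1.subset_ground
      have hcard1 : (B1 \ X).ncard = 1 := by
        rw [Set.ncard_diff hXB1 hXfin, hrank _ hB1, hcard]
        omega
      obtain ⟨g, hg⟩ := Set.ncard_eq_one.1 hcard1
      have hgC : g ∈ C := by
        have : g ∈ B1 \ X := hg ▸ rfl
        rcases hB1XC this.1 with h | h
        · exact absurd h this.2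
        · exact h
      have hB1eq : B1 = X ∪ {g} := by
        rw [← diff_union_of_subset hXB1, hg, union_comm]
      -- both X ∪ {e} and X ∪ {f} are bases
      have hbases : M.IsBase (X ∪ {e}) ∧ M.IsBase (X ∪ {f}) := by
        rcases hgC with rfl | rfl
        · rw [hB1eq] at hB1
          refine ⟨hB1, ?_⟩
          have := (haut _).1 hB1
          rwa [hswap X hXd] at this
        · rw [hB1eq] at hB1
          refine ⟨?_, hB1⟩
          have := (haut _).1 hB1
          rwa [hswap' X hXd] at this
      rcases hmem with ⟨he, hf⟩ | ⟨hf, he⟩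
      · have hBeq : B = X ∪ {e} := by
          ext x
          simp only [hX, hC, mem_union, mem_diff, mem_insert_iff, mem_singleton_iff]
          constructor
          · intro hx
            by_cases hxe : x = e
            · exact Or.inr hxe
            · refine Or.inl ⟨hx, ?_⟩
              rintro (rfl | rfl)
              · exact hxe rfl
              · exact hf hx
          · rintro (⟨hx, -⟩ | rfl)
            · exact hx
            · exact he
        rw [hBeq]; exact hbases.1
      · have hBeq : B = X ∪ {f} := by
          ext x
          simp only [hX, hC, mem_union, mem_diff, mem_insert_iff, mem_singleton_iff]
          constructor
          · intro hx
            by_cases hxf : x = f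
            · exact Or.inr hxf
            · refine Or.inl ⟨hx, ?_⟩
              rintro (rfl | rfl)
              · exact he hx
              · exact hxf rfl
          · rintro (⟨hx, -⟩ | rfl)
            · exact hx
            · exact hf
        rw [hBeq]; exact hbases.2

end Matroid

/-- A finite matroid `M` having the transposition `(e f)` as an automorphism, with `{e,f}`
independent and coindependent, is uniquely determined by its rank together with the
deletion `M \ {e,f}` and the contraction `M / {e,f}`. -/
theorem stmt_17 {α : Type*} [DecidableEq α] (M M' : Matroid α) [M.Finite] [M'.Finite]
    (e f : α) (hef : e ≠ f)
    (haut : ∀ B : Set α, M.IsBase B ↔ M.IsBase ((Equiv.swap e f) '' B))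
    (haut' : ∀ B : Set α, M'.IsBase B ↔ M'.IsBase ((Equiv.swap e f) '' B))
    (hind : M.Indep {e, f}) (hcoind : M.Coindep {e, f})
    (hind' : M'.Indep {e, f}) (hcoind' : M'.Coindep {e, f})
    (r : ℕ) (hrank : ∀ B, M.IsBase B → B.ncard = r) (hrank' : ∀ B, M'.IsBase B → B.ncard = r)
    (hdel : M.del {e, f} = M'.del {e, f}) (hcon : M.con {e, f} = M'.con {e, f}) :
    M = M' := by
  have hgr : M.E \ {e, f} = M'.E \ {e, f} := by
    have := congrArg Matroid.E hdel
    rwa [Matroid.del_ground', Matroid.del_ground'] at this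
  have hE : M.E = M'.E := by
    rw [← Set.diff_union_of_subset hind.subset_ground,
      ← Set.diff_union_of_subset hind'.subset_ground, hgr]
  refine Matroid.ext_isBase hE fun B _ => ?_
  rw [Matroid.base_iff_aux M e f hef haut hind hcoind r hrank B,
    Matroid.base_iff_aux M' e f hef haut' hind' hcoind' r hrank' B, hdel, hcon]
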